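/- Consider the closed-loop stochastic recursion x(k+1) = (A + B K C(k)) x(k) with deterministic initial condition x(0) = x₀ ∈ ℝⁿ, where C(k) = Diag(c₁(k)/p₁, …, cₙ(k)/pₙ) and the family (cᵢ(k))_{k∈ℕ, 1≤i≤n} consists of mutually independent Bernoulli random variables with parameters pᵢ ∈ (0,1]. Let D := A + B K, L := B K, and sᵢ := Σ_{k=1}^{n} L_{k,i}². Assume ‖D‖₂ < 1, sᵢ > 0 for every i, and pᵢ > 1/(1 + (1 − ‖D‖₂²)/sᵢ) for every i ∈ {1,…,n}. Then the closed-loop system is asymptotically mean-square stable: E[‖x(k)‖²] → 0 as k → ∞ for every initial condition x₀ ∈ ℝⁿ. -/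

import Mathlib

open MeasureTheory ProbabilityTheory Matrix Filter

/-- The spectral norm (ℓ²-operator norm) of a real square matrix. -/
noncomputable def specNorm {n : ℕ} (M : Matrix (Fin n) (Fin n) ℝ) : ℝ :=
  ‖LinearMap.toContinuousLinearMap (Matrix.toEuclideanLin M)‖

lemma specNorm_nonneg {n : ℕ} (M : Matrix (Fin n) (Fin n) ℝ) : 0 ≤ specNorm M :=
  norm_nonneg _

lemma sq_sum_mulVec_le {n : ℕ} (M : Matrix (Fin n) (Fin n) ℝ) (v : Fin n → ℝ) :
    ∑ i, (M.mulVec v i) ^ 2 ≤ specNorm M ^ 2 * ∑ i, v i ^ 2 := by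
  set w : EuclideanSpace ℝ (Fin n) := (WithLp.equiv 2 (Fin n → ℝ)).symm v with hw
  have h1 : ‖Matrix.toEuclideanLin M w‖ ≤ specNorm M * ‖w‖ := by
    have := (LinearMap.toContinuousLinearMap (Matrix.toEuclideanLin M)).le_opNorm w
    simpa only [specNorm, LinearMap.coe_toContinuousLinearMap'] using this
  have hwn : ‖w‖ ^ 2 = ∑ i, v i ^ 2 := by
    rw [EuclideanSpace.norm_eq, Real.sq_sqrt (by positivity)]
    simp only [Real.norm_eq_abs, sq_abs]
    rfl
  have hMn : ‖Matrix.toEuclideanLin M w‖ ^ 2 = ∑ i, (M.mulVec v i) ^ 2 := by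
    rw [EuclideanSpace.norm_eq, Real.sq_sqrt (by positivity)]
    simp only [Real.norm_eq_abs, sq_abs]
    rfl
  calc ∑ i, (M.mulVec v i) ^ 2 = ‖Matrix.toEuclideanLin M w‖ ^ 2 := hMn.symm
    _ ≤ (specNorm M * ‖w‖) ^ 2 := by
        apply pow_le_pow_left₀ (norm_nonneg _) h1
    _ = specNorm M ^ 2 * ∑ i, v i ^ 2 := by rw [mul_pow, hwn]

lemma integrable_of_bdd {Ω : Type*} [MeasurableSpace Ω] {μ : Measure Ω}
    [IsProbabilityMeasure μ] {f : Ω → ℝ} (hf : Measurable f) {C : ℝ}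
    (h : ∀ ω, |f ω| ≤ C) : Integrable f μ :=
  ⟨hf.aestronglyMeasurable, HasFiniteIntegral.of_bounded (ae_of_all _ h)⟩

lemma integral_of_01 {Ω : Type*} [MeasurableSpace Ω] (μ : Measure Ω)
    [IsProbabilityMeasure μ] {f : Ω → ℝ} (hf : Measurable f)
    (h01 : ∀ ω, f ω = 0 ∨ f ω = 1) :
    ∫ ω, f ω ∂μ = (μ {ω | f ω = 1}).toReal := by
  have hset : MeasurableSet {ω | f ω = 1} := hf (measurableSet_singleton 1)
  have heq : ∀ ω, f ω = Set.indicator {ω | f ω = 1} (fun _ => (1:ℝ)) ω := by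
    intro ω
    rcases h01 ω with h | h
    · rw [h, Set.indicator_of_notMem]; simp [Set.mem_setOf_eq, h]
    · rw [h, Set.indicator_of_mem]; exact h
  rw [integral_congr_ae (ae_of_all _ heq), integral_indicator_const _ hset]
  simp
  rfl

/-- Deterministic unfolding of the recursion as a function of the Bernoulli history. -/
noncomputable def histFun {n : ℕ} (A L : Matrix (Fin n) (Fin n) ℝ) (p : Fin n → ℝ)
    (x₀ : Fin n → ℝ) : ℕ → ((ℕ × Fin n) → ℝ) → (Fin n → ℝ)
  | 0, _ => x₀
  | (k+1), y =>
      (A + L * Matrix.diagonal (fun i => y (k, i) / p i)).mulVec (histFun A L p x₀ k y)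

lemma histFun_measurable {n : ℕ} (A L : Matrix (Fin n) (Fin n) ℝ) (p : Fin n → ℝ)
    (x₀ : Fin n → ℝ) (k : ℕ) : Measurable (histFun A L p x₀ k) := by
  induction k with
  | zero => exact measurable_const
  | succ k ih =>
    apply measurable_pi_lambda
    intro i
    have : (fun y => histFun A L p x₀ (k+1) y i)
        = fun y => ∑ j, (A i j + L i j * (y (k, j) / p j)) * histFun A L p x₀ k y j := by
      funext y
      simp [histFun, Matrix.mulVec, dotProduct, Matrix.add_apply, Matrix.mul_diagonal]
    rw [show (fun y => histFun A L p x₀ (k+1) y i) = _ from this]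
    apply Finset.measurable_sum
    intro j _
    exact ((measurable_const.add (((measurable_pi_apply (k, j)).div_const (p j)).const_mul
      (L i j))).mul ((measurable_pi_apply j).comp ih))

lemma histFun_congr {n : ℕ} (A L : Matrix (Fin n) (Fin n) ℝ) (p : Fin n → ℝ)
    (x₀ : Fin n → ℝ) (k : ℕ) (y y' : (ℕ × Fin n) → ℝ)
    (h : ∀ j < k, ∀ i, y (j, i) = y' (j, i)) :
    histFun A L p x₀ k y = histFun A L p x₀ k y' := by
  induction k with
  | zero => rfl
  | succ k ih =>
    simp only [histFun]
    rw [ih (fun j hj i => h j (Nat.lt_succ_of_lt hj) i)]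
    have : (fun i => y (k, i) / p i) = fun i => y' (k, i) / p i := by
      funext i; rw [h k (Nat.lt_succ_self k) i]
    rw [this]

/-- For the closed-loop stochastic recursion
`x(k+1) = (A + B K C(k)) x(k)` with `C(k) = Diag(c₁(k)/p₁, …, cₙ(k)/pₙ)` built from
mutually independent Bernoulli random variables with parameters `pᵢ ∈ (0,1]`, with
`D := A + B K`, `L := B K`, `sᵢ := Σₖ L_{k,i}²`: if `‖D‖₂ < 1`, every `sᵢ > 0`, and
`pᵢ > 1/(1 + (1 − ‖D‖₂²)/sᵢ)` for every `i`, then the closed-loop system is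
asymptotically mean-square stable: `E[‖x(k)‖²] → 0` for every initial condition. -/
theorem amss_adaptive
    {n m : ℕ} (A : Matrix (Fin n) (Fin n) ℝ) (B : Matrix (Fin n) (Fin m) ℝ)
    (K : Matrix (Fin m) (Fin n) ℝ)
    {Ω : Type*} [MeasurableSpace Ω] (μ : Measure Ω) [IsProbabilityMeasure μ]
    (p : Fin n → ℝ) (hp : ∀ i, p i ∈ Set.Ioc (0 : ℝ) 1)
    (c : ℕ → Fin n → Ω → ℝ)
    (hmeas : ∀ k i, Measurable (c k i))
    (h01 : ∀ k i ω, c k i ω = 0 ∨ c k i ω = 1)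
    (hber : ∀ k i, μ {ω | c k i ω = 1} = ENNReal.ofReal (p i))
    (hindep : iIndepFun
      (fun (ki : ℕ × Fin n) ω => c ki.1 ki.2 ω) μ)
    (hD : specNorm (A + B * K) < 1)
    (hs : ∀ i, 0 < ∑ j, ((B * K) j i) ^ 2)
    (hpgt : ∀ i, p i >
      1 / (1 + (1 - specNorm (A + B * K) ^ 2) / (∑ j, ((B * K) j i) ^ 2)))
    (x₀ : Fin n → ℝ) (x : ℕ → Ω → Fin n → ℝ)
    (hx0 : ∀ ω, x 0 ω = x₀)
    (hxrec : ∀ k ω, x (k + 1) ω =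
      (A + B * K * Matrix.diagonal (fun i => c k i ω / p i)).mulVec (x k ω)) :
    Tendsto (fun k => ∫ ω, ∑ i, (x k ω i) ^ 2 ∂μ) atTop (nhds 0) := by
  rcases Nat.eq_zero_or_pos n with hn | hn
  · subst hn
    have hz : ∀ k : ℕ, (fun _ : ℕ => (0:ℝ)) k = ∫ ω, ∑ i, (x k ω i) ^ 2 ∂μ := by
      intro k; simp
    exact Tendsto.congr hz tendsto_const_nhds
  haveI : NeZero n := ⟨Nat.pos_iff_ne_zero.mp hn⟩
  set L := B * K with hL
  -- basic facts about p
  have hp0 : ∀ i, 0 < p i := fun i => (hp i).1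
  have hp1 : ∀ i, p i ≤ 1 := fun i => (hp i).2
  -- the contraction factor
  set d : Fin n → ℝ := fun i => (∑ j, L j i ^ 2) * (1 / p i - 1) with hd
  have hd0 : ∀ i, 0 ≤ d i := by
    intro i
    have h1 : (1:ℝ) ≤ 1 / p i := by
      rw [le_div_iff₀ (hp0 i)]; simpa using hp1 i
    exact mul_nonneg (le_of_lt (hs i)) (by linarith)
  have hspec2 : specNorm (A + L) ^ 2 < 1 :=
    pow_lt_one₀ (specNorm_nonneg _) hD two_ne_zero
  have hdlt : ∀ i, d i < 1 - specNorm (A + L) ^ 2 := by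
    intro i
    have hsi := hs i
    set t : ℝ := (1 - specNorm (A + L) ^ 2) / (∑ j, L j i ^ 2) with hteq
    have ht : 0 < t := div_pos (by linarith) hsi
    have h1t : (0:ℝ) < 1 + t := by linarith
    have hlt : 1 / p i < 1 + t := (one_div_lt (hp0 i) h1t).mpr (hpgt i)
    have hst : (∑ j, L j i ^ 2) * t = 1 - specNorm (A + L) ^ 2 := by
      rw [hteq, mul_comm, div_mul_cancel₀ _ (ne_of_gt hsi)]
    calc d i = (∑ j, L j i ^ 2) * (1 / p i - 1) := rfl
      _ < (∑ j, L j i ^ 2) * t := by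
          apply mul_lt_mul_of_pos_left (by linarith) hsi
      _ = 1 - specNorm (A + L) ^ 2 := hst
  have hne : (Finset.univ : Finset (Fin n)).Nonempty := Finset.univ_nonempty
  set ρ : ℝ := specNorm (A + L) ^ 2 + Finset.univ.sup' hne d with hρ
  have hρ0 : 0 ≤ ρ := by
    have := le_trans (hd0 (Classical.arbitrary (Fin n)))
      (Finset.le_sup' d (Finset.mem_univ _))
    have h2 : (0:ℝ) ≤ specNorm (A + L) ^ 2 := sq_nonneg _
    linarith
  have hρ1 : ρ < 1 := by
    have : Finset.univ.sup' hne d < 1 - specNorm (A + L) ^ 2 :=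
      (Finset.sup'_lt_iff hne).mpr fun i _ => hdlt i
    rw [hρ]; linarith
  -- measurability of the state
  have hxm : ∀ k i, Measurable fun ω => x k ω i := by
    intro k
    induction k with
    | zero => intro i; simp only [hx0]; exact measurable_const
    | succ k ih =>
      intro i
      have heq : (fun ω => x (k+1) ω i)
          = fun ω => ∑ j, (A i j + L i j * (c k j ω / p j)) * x k ω j := by
        funext ω; rw [hxrec]
        simp [Matrix.mulVec, dotProduct, Matrix.add_apply, Matrix.mul_diagonal]
      rw [heq]
      exact Finset.measurable_sum _ fun j _ =>
        (measurable_const.add (((hmeas k j).div_const (p j)).const_mul (L i j))).mul (ih j)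
  -- boundedness of the state
  have hc1 : ∀ k i ω, |c k i ω| ≤ 1 := by
    intro k i ω; rcases h01 k i ω with h | h <;> simp [h]
  have hCaNN : ∀ i j : Fin n, (0:ℝ) ≤ |A i j| + |L i j| / p j := fun i j =>
    add_nonneg (abs_nonneg _) (div_nonneg (abs_nonneg _) (hp0 j).le)
  have hxb : ∀ k, ∃ C : ℝ, 0 ≤ C ∧ ∀ ω i, |x k ω i| ≤ C := by
    intro k
    induction k with
    | zero =>
      refine ⟨∑ i, |x₀ i|, Finset.sum_nonneg fun i _ => abs_nonneg _, ?_⟩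
      intro ω i; rw [hx0]
      exact Finset.single_le_sum (fun j _ => abs_nonneg (x₀ j)) (Finset.mem_univ i)
    | succ k ih =>
      obtain ⟨C, hC0, hC⟩ := ih
      refine ⟨(∑ q : Fin n × Fin n, (|A q.1 q.2| + |L q.1 q.2| / p q.2)) * C,
        mul_nonneg (Finset.sum_nonneg fun q _ => hCaNN q.1 q.2) hC0, ?_⟩
      intro ω i
      have heq : x (k+1) ω i = ∑ j, (A i j + L i j * (c k j ω / p j)) * x k ω j := by
        rw [hxrec]
        simp [Matrix.mulVec, dotProduct, Matrix.add_apply, Matrix.mul_diagonal]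
      rw [heq]
      calc |∑ j, (A i j + L i j * (c k j ω / p j)) * x k ω j|
          ≤ ∑ j, |(A i j + L i j * (c k j ω / p j)) * x k ω j| :=
            Finset.abs_sum_le_sum_abs _ _
        _ ≤ ∑ j, (|A i j| + |L i j| / p j) * C := by
            apply Finset.sum_le_sum
            intro j _
            rw [abs_mul]
            apply mul_le_mul _ (hC ω j) (abs_nonneg _) (hCaNN i j)
            calc |A i j + L i j * (c k j ω / p j)|
                ≤ |A i j| + |L i j * (c k j ω / p j)| := abs_add_le _ _
              _ = |A i j| + |L i j| * (|c k j ω| / p j) := by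
                  rw [abs_mul, abs_div, abs_of_pos (hp0 j)]
              _ ≤ |A i j| + |L i j| * (1 / p j) := by
                  gcongr <;> first | exact (hp0 j).le | exact hc1 k j ω
              _ = |A i j| + |L i j| / p j := by ring
        _ ≤ (∑ q : Fin n × Fin n, (|A q.1 q.2| + |L q.1 q.2| / p q.2)) * C := by
            rw [← Finset.sum_mul]
            apply mul_le_mul_of_nonneg_right _ hC0
            rw [Fintype.sum_prod_type]
            exact Finset.single_le_sum
              (f := fun i₀ => ∑ y, (|A i₀ y| + |L i₀ y| / p y))
              (fun i' _ => Finset.sum_nonneg fun j _ => hCaNN i' j)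
              (Finset.mem_univ i)
  -- representation via histFun
  have hrep : ∀ k ω, x k ω = histFun A L p x₀ k (fun ji => c ji.1 ji.2 ω) := by
    intro k
    induction k with
    | zero => intro ω; rw [hx0]; rfl
    | succ k ih =>
      intro ω; rw [hxrec]
      show _ = histFun A L p x₀ (k+1) _
      simp only [histFun]
      rw [ih ω]
  -- first and second moments of the Bernoulli variables
  have Ec : ∀ k i, ∫ ω, c k i ω ∂μ = p i := by
    intro k i
    rw [integral_of_01 μ (hmeas k i) (h01 k i), hber k i,
      ENNReal.toReal_ofReal (hp0 i).le]
  have Ecc : ∀ k i j, ∫ ω, c k i ω * c k j ω ∂μ = if i = j then p i else p i * p j := by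
    intro k i j
    by_cases h : i = j
    · subst h
      have hsq : ∀ ω, c k i ω * c k i ω = c k i ω := by
        intro ω; rcases h01 k i ω with h | h <;> simp [h]
      rw [if_pos rfl, integral_congr_ae (ae_of_all _ hsq), Ec]
    · have hne2 : ((k, i) : ℕ × Fin n) ≠ (k, j) := by
        simp [Prod.ext_iff, h]
      have hind2 : IndepFun (c k i) (c k j) μ := hindep.indepFun hne2
      rw [if_neg h]
      have := hind2.integral_mul_eq_mul_integral (hmeas k i).aestronglyMeasurable
        (hmeas k j).aestronglyMeasurable
      rw [show (fun ω => c k i ω * c k j ω) = c k i * c k j from rfl]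
      rw [show (∫ ω, (c k i * c k j) ω ∂μ) = integral μ (c k i * c k j) from rfl, this,
        Ec, Ec]
  -- the one-step contraction
  have hstep : ∀ k, (∫ ω, ∑ i, (x (k+1) ω i) ^ 2 ∂μ) ≤ ρ * ∫ ω, ∑ i, (x k ω i) ^ 2 ∂μ := by
    intro k
    obtain ⟨C, hC0, hC⟩ := hxb k
    -- independence of the step-k coins from the current state
    have hindkey : IndepFun (fun ω (i : Fin n) => c k i ω) (x k) μ := by
      classical
      set S : Finset (ℕ × Fin n) := {k} ×ˢ Finset.univ with hS
      set T : Finset (ℕ × Fin n) := Finset.range k ×ˢ Finset.univ with hT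
      have hdisj : Disjoint S T := by
        rw [Finset.disjoint_left]
        intro q hq hq'
        simp only [hS, hT, Finset.mem_product, Finset.mem_singleton,
          Finset.mem_range, Finset.mem_univ, and_true] at hq hq'
        omega
      have base := hindep.indepFun_finset S T hdisj (fun ki => hmeas ki.1 ki.2)
      have hmemS : ∀ i : Fin n, ((k, i) : ℕ × Fin n) ∈ S := by
        intro i; simp [hS, Finset.mem_product]
      set φS : (S → ℝ) → (Fin n → ℝ) := fun z i => z ⟨(k, i), hmemS i⟩ with hφSdef
      set φT : (T → ℝ) → (Fin n → ℝ) := fun z =>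
        histFun A L p x₀ k (fun ji => if h : ji ∈ T then z ⟨ji, h⟩ else 0) with hφTdef
      have hφS : Measurable φS :=
        measurable_pi_lambda _ fun i => measurable_pi_apply _
      have hφT : Measurable φT := by
        apply (histFun_measurable A L p x₀ k).comp
        apply measurable_pi_lambda
        intro ji
        by_cases h : ji ∈ T
        · simp only [dif_pos h]; exact measurable_pi_apply _
        · simp only [dif_neg h]; exact measurable_const
      have hcomp := base.comp hφS hφT
      have h1 : φS ∘ (fun ω (a : S) => c (a : ℕ × Fin n).1 (a : ℕ × Fin n).2 ω)
          = fun ω i => c k i ω := rfl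
      have h2 : φT ∘ (fun ω (a : T) => c (a : ℕ × Fin n).1 (a : ℕ × Fin n).2 ω)
          = x k := by
        funext ω
        show histFun A L p x₀ k (fun ji => if h : ji ∈ T then c ji.1 ji.2 ω else 0)
          = x k ω
        rw [histFun_congr A L p x₀ k _ (fun ji => c ji.1 ji.2 ω) ?_, ← hrep k ω]
        intro j hj i
        have hmem : ((j, i) : ℕ × Fin n) ∈ T := by
          simp [hT, Finset.mem_product, Finset.mem_range, hj]
        simp only [dif_pos hmem]
      rw [← h1, ← h2]
      exact hcomp
    -- pointwise expansion
    have hA : ∀ ω, ∑ i, (x (k+1) ω i) ^ 2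
        = ∑ i, ∑ i', ∑ j',
            ((A i i' + L i i' * (c k i' ω / p i')) * (A i j' + L i j' * (c k j' ω / p j')))
              * (x k ω i' * x k ω j') := by
      intro ω
      rw [hxrec]
      apply Finset.sum_congr rfl
      intro i _
      have hmv : ((A + L * Matrix.diagonal fun i => c k i ω / p i).mulVec (x k ω)) i
          = ∑ i', (A i i' + L i i' * (c k i' ω / p i')) * x k ω i' := by
        simp [Matrix.mulVec, dotProduct, Matrix.add_apply, Matrix.mul_diagonal]
      rw [hmv, sq, Finset.sum_mul_sum]
      exact Finset.sum_congr rfl fun i' _ => Finset.sum_congr rfl fun j' _ => by ring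
    -- integrability of the pieces
    have hamm : ∀ i j, Measurable fun ω => A i j + L i j * (c k j ω / p j) := fun i j =>
      measurable_const.add (((hmeas k j).div_const (p j)).const_mul (L i j))
    have haab : ∀ i j ω, |A i j + L i j * (c k j ω / p j)| ≤ |A i j| + |L i j| / p j := by
      intro i j ω
      calc |A i j + L i j * (c k j ω / p j)|
          ≤ |A i j| + |L i j * (c k j ω / p j)| := abs_add_le _ _
        _ = |A i j| + |L i j| * (|c k j ω| / p j) := by
            rw [abs_mul, abs_div, abs_of_pos (hp0 j)]
        _ ≤ |A i j| + |L i j| * (1 / p j) := by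
            gcongr <;> first | exact (hp0 j).le | exact hc1 k j ω
        _ = |A i j| + |L i j| / p j := by ring
    have hterm_int : ∀ i i' j', Integrable (fun ω =>
        ((A i i' + L i i' * (c k i' ω / p i')) * (A i j' + L i j' * (c k j' ω / p j')))
          * (x k ω i' * x k ω j')) μ := by
      intro i i' j'
      apply integrable_of_bdd (((hamm i i').mul (hamm i j')).mul ((hxm k i').mul (hxm k j')))
        (C := ((|A i i'| + |L i i'| / p i') * (|A i j'| + |L i j'| / p j')) * (C * C))
      intro ω
      simp only [Pi.mul_apply]
      rw [abs_mul, abs_mul, abs_mul]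
      have h12 : |A i i' + L i i' * (c k i' ω / p i')| * |A i j' + L i j' * (c k j' ω / p j')|
          ≤ (|A i i'| + |L i i'| / p i') * (|A i j'| + |L i j'| / p j') :=
        mul_le_mul (haab i i' ω) (haab i j' ω) (abs_nonneg _) (hCaNN i i')
      have hvv : |x k ω i'| * |x k ω j'| ≤ C * C :=
        mul_le_mul (hC ω i') (hC ω j') (abs_nonneg _) hC0
      exact mul_le_mul h12 hvv (mul_nonneg (abs_nonneg _) (abs_nonneg _))
        (mul_nonneg (hCaNN i i') (hCaNN i j'))
    have hvv_int : ∀ i' j', Integrable (fun ω => x k ω i' * x k ω j') μ := by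
      intro i' j'
      apply integrable_of_bdd ((hxm k i').mul (hxm k j')) (C := C * C)
      intro ω
      simp only [Pi.mul_apply]
      rw [abs_mul]
      exact mul_le_mul (hC ω i') (hC ω j') (abs_nonneg _) hC0
    -- split the integral into a triple sum
    have hB : (∫ ω, ∑ i, (x (k+1) ω i) ^ 2 ∂μ)
        = ∑ i, ∑ i', ∑ j', ∫ ω,
            ((A i i' + L i i' * (c k i' ω / p i')) * (A i j' + L i j' * (c k j' ω / p j')))
              * (x k ω i' * x k ω j') ∂μ := by
      rw [integral_congr_ae (ae_of_all _ hA)]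
      rw [integral_finset_sum _ (fun i _ => integrable_finset_sum _
        (fun i' _ => integrable_finset_sum _ (fun j' _ => hterm_int i i' j')))]
      refine Finset.sum_congr rfl fun i _ => ?_
      rw [integral_finset_sum _ (fun i' _ => integrable_finset_sum _
        (fun j' _ => hterm_int i i' j'))]
      exact Finset.sum_congr rfl fun i' _ => integral_finset_sum _
        (fun j' _ => hterm_int i i' j')
    -- factorize each term using independence
    have hfac : ∀ i i' j', (∫ ω,
        ((A i i' + L i i' * (c k i' ω / p i')) * (A i j' + L i j' * (c k j' ω / p j')))
          * (x k ω i' * x k ω j') ∂μ)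
        = (∫ ω, (A i i' + L i i' * (c k i' ω / p i'))
            * (A i j' + L i j' * (c k j' ω / p j')) ∂μ)
          * ∫ ω, x k ω i' * x k ω j' ∂μ := by
      intro i i' j'
      have hf : Measurable fun z : Fin n → ℝ =>
          (A i i' + L i i' * (z i' / p i')) * (A i j' + L i j' * (z j' / p j')) :=
        (measurable_const.add (((measurable_pi_apply i').div_const _).const_mul _)).mul
          (measurable_const.add (((measurable_pi_apply j').div_const _).const_mul _))
      have hg : Measurable fun u : Fin n → ℝ => u i' * u j' :=
        (measurable_pi_apply i').mul (measurable_pi_apply j')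
      have hwm : Measurable fun ω => (fun i : Fin n => c k i ω) :=
        measurable_pi_lambda _ fun i => hmeas k i
      have hvm : Measurable (x k) := measurable_pi_lambda _ fun i => hxm k i
      exact (hindkey.comp hf hg).integral_mul_eq_mul_integral
        ((hf.comp hwm).aestronglyMeasurable) ((hg.comp hvm).aestronglyMeasurable)
    -- compute the coefficient integrals
    have hEa : ∀ i i' j', (∫ ω, (A i i' + L i i' * (c k i' ω / p i'))
          * (A i j' + L i j' * (c k j' ω / p j')) ∂μ)
        = (A + L) i i' * (A + L) i j'
          + (if i' = j' then L i i' * L i j' * (1 / p i' - 1) else 0) := by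
      intro i i' j'
      have hexp : ∀ ω, (A i i' + L i i' * (c k i' ω / p i'))
            * (A i j' + L i j' * (c k j' ω / p j'))
          = A i i' * A i j' + ((A i i' * L i j' / p j') * c k j' ω
            + ((L i i' * A i j' / p i') * c k i' ω
            + (L i i' * L i j' / (p i' * p j')) * (c k i' ω * c k j' ω))) := by
        intro ω; ring
      have hint1 : Integrable (fun ω => (A i i' * L i j' / p j') * c k j' ω) μ :=
        (integrable_of_bdd (hmeas k j') (hc1 k j')).const_mul _
      have hint2 : Integrable (fun ω => (L i i' * A i j' / p i') * c k i' ω) μ :=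
        (integrable_of_bdd (hmeas k i') (hc1 k i')).const_mul _
      have hint3 : Integrable (fun ω =>
          (L i i' * L i j' / (p i' * p j')) * (c k i' ω * c k j' ω)) μ := by
        apply Integrable.const_mul
        apply integrable_of_bdd ((hmeas k i').mul (hmeas k j')) (C := 1)
        intro ω
        simp only [Pi.mul_apply]
        rw [abs_mul]
        calc |c k i' ω| * |c k j' ω| ≤ 1 * 1 :=
          mul_le_mul (hc1 k i' ω) (hc1 k j' ω) (abs_nonneg _) zero_le_one
        _ = 1 := mul_one 1
      have hint23 : Integrable (fun ω =>
          L i i' * A i j' / p i' * c k i' ω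
            + L i i' * L i j' / (p i' * p j') * (c k i' ω * c k j' ω)) μ := hint2.add hint3
      have hint123 : Integrable (fun ω =>
          A i i' * L i j' / p j' * c k j' ω
            + (L i i' * A i j' / p i' * c k i' ω
              + L i i' * L i j' / (p i' * p j') * (c k i' ω * c k j' ω))) μ :=
        hint1.add hint23
      rw [integral_congr_ae (ae_of_all _ hexp),
        integral_add (integrable_const _) hint123,
        integral_add hint1 hint23, integral_add hint2 hint3, integral_const_mul,
        integral_const_mul, integral_const_mul, integral_const_mul, integral_const,
        Ec, Ec, Ecc]
      simp only [measure_univ, probReal_univ, ENNReal.toReal_one, smul_eq_mul, one_mul, Matrix.add_apply]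
      by_cases h : i' = j'
      · subst h
        rw [if_pos rfl, if_pos rfl]
        field_simp [(hp0 i').ne']
        ring
      · rw [if_neg h, if_neg h]
        field_simp [(hp0 i').ne', (hp0 j').ne']
        ring

    -- the quadratic-form coefficient matrix
    have hQsum : ∀ i' j', (∑ i, ((A + L) i i' * (A + L) i j'
          + (if i' = j' then L i i' * L i j' * (1 / p i' - 1) else 0)))
        = (∑ i, (A + L) i i' * (A + L) i j')
          + (if i' = j' then d i' else 0) := by
      intro i' j'
      rw [Finset.sum_add_distrib]
      congr 1
      by_cases h : i' = j'
      · subst h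
        simp only [eq_self_iff_true, if_true, hd]
        rw [Finset.sum_mul]
        exact Finset.sum_congr rfl fun i _ => by ring
      · simp [h]
    -- pointwise quadratic-form bound
    have hquad : ∀ w : Fin n → ℝ,
        (∑ i', ∑ j', ((∑ i, (A + L) i i' * (A + L) i j')
          + (if i' = j' then d i' else 0)) * (w i' * w j'))
        ≤ ρ * ∑ i, w i ^ 2 := by
      intro w
      have hsplit : (∑ i', ∑ j', ((∑ i, (A + L) i i' * (A + L) i j')
            + (if i' = j' then d i' else 0)) * (w i' * w j'))
          = (∑ i', ∑ j', (∑ i, (A + L) i i' * (A + L) i j') * (w i' * w j'))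
            + ∑ i', ∑ j', (if i' = j' then d i' else 0) * (w i' * w j') := by
        rw [← Finset.sum_add_distrib]
        apply Finset.sum_congr rfl
        intro i' _
        rw [← Finset.sum_add_distrib]
        exact Finset.sum_congr rfl fun j' _ => add_mul _ _ _
      have h1 : (∑ i', ∑ j', (∑ i, (A + L) i i' * (A + L) i j') * (w i' * w j'))
          = ∑ i, ((A + L).mulVec w i) ^ 2 := by
        have e1 : ∑ i, ((A + L).mulVec w i) ^ 2
            = ∑ i, ∑ i', ∑ j', ((A + L) i i' * w i') * ((A + L) i j' * w j') := by
          apply Finset.sum_congr rfl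
          intro i _
          rw [show (A + L).mulVec w i = ∑ i', (A + L) i i' * w i' from by
            simp [Matrix.mulVec, dotProduct], sq, Finset.sum_mul_sum]
        calc (∑ i', ∑ j', (∑ i, (A + L) i i' * (A + L) i j') * (w i' * w j'))
            = ∑ i', ∑ j', ∑ i, ((A + L) i i' * w i') * ((A + L) i j' * w j') := by
              refine Finset.sum_congr rfl fun i' _ => Finset.sum_congr rfl fun j' _ => ?_
              rw [Finset.sum_mul]
              exact Finset.sum_congr rfl fun i _ => by ring
          _ = ∑ i', ∑ i, ∑ j', ((A + L) i i' * w i') * ((A + L) i j' * w j') :=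
              Finset.sum_congr rfl fun i' _ => Finset.sum_comm
          _ = ∑ i, ∑ i', ∑ j', ((A + L) i i' * w i') * ((A + L) i j' * w j') :=
              Finset.sum_comm
          _ = ∑ i, ((A + L).mulVec w i) ^ 2 := e1.symm
      have h2 : (∑ i', ∑ j', (if i' = j' then d i' else 0) * (w i' * w j'))
          = ∑ i', d i' * w i' ^ 2 := by
        apply Finset.sum_congr rfl
        intro i' _
        have : ∀ j', (if i' = j' then d i' else 0) * (w i' * w j')
            = if i' = j' then d i' * (w i' * w j') else 0 := by
          intro j'; split <;> simp
        rw [Finset.sum_congr rfl fun j' _ => this j']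
        rw [Finset.sum_ite_eq]
        simp [sq, mul_assoc]
      rw [hsplit, h1, h2]
      have hb1 : ∑ i, ((A + L).mulVec w i) ^ 2 ≤ specNorm (A + L) ^ 2 * ∑ i, w i ^ 2 :=
        sq_sum_mulVec_le (A + L) w
      have hb2 : (∑ i', d i' * w i' ^ 2) ≤ (Finset.univ.sup' hne d) * ∑ i, w i ^ 2 := by
        rw [Finset.mul_sum]
        apply Finset.sum_le_sum
        intro i _
        exact mul_le_mul_of_nonneg_right (Finset.le_sup' d (Finset.mem_univ i)) (sq_nonneg _)
      rw [hρ, add_mul]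
      linarith
    -- assemble the one-step bound
    calc (∫ ω, ∑ i, (x (k+1) ω i) ^ 2 ∂μ)
        = ∑ i, ∑ i', ∑ j', ∫ ω,
            ((A i i' + L i i' * (c k i' ω / p i')) * (A i j' + L i j' * (c k j' ω / p j')))
              * (x k ω i' * x k ω j') ∂μ := hB
      _ = ∑ i, ∑ i', ∑ j',
            ((A + L) i i' * (A + L) i j'
              + (if i' = j' then L i i' * L i j' * (1 / p i' - 1) else 0))
            * ∫ ω, x k ω i' * x k ω j' ∂μ := by
          refine Finset.sum_congr rfl fun i _ => Finset.sum_congr rfl fun i' _ =>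
            Finset.sum_congr rfl fun j' _ => ?_
          rw [hfac i i' j', hEa i i' j']
      _ = ∑ i', ∑ i, ∑ j',
            (((A + L) i i' * (A + L) i j'
              + (if i' = j' then L i i' * L i j' * (1 / p i' - 1) else 0))
            * ∫ ω, x k ω i' * x k ω j' ∂μ) := Finset.sum_comm
      _ = ∑ i', ∑ j', ∑ i,
            (((A + L) i i' * (A + L) i j'
              + (if i' = j' then L i i' * L i j' * (1 / p i' - 1) else 0))
            * ∫ ω, x k ω i' * x k ω j' ∂μ) :=
          Finset.sum_congr rfl fun i' _ => Finset.sum_comm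
      _ = ∑ i', ∑ j', ((∑ i, (A + L) i i' * (A + L) i j')
            + (if i' = j' then d i' else 0)) * ∫ ω, x k ω i' * x k ω j' ∂μ := by
          refine Finset.sum_congr rfl fun i' _ => Finset.sum_congr rfl fun j' _ => ?_
          rw [← Finset.sum_mul, hQsum i' j']
      _ = ∫ ω, ∑ i', ∑ j', ((∑ i, (A + L) i i' * (A + L) i j')
            + (if i' = j' then d i' else 0)) * (x k ω i' * x k ω j') ∂μ := by
          rw [integral_finset_sum _ (fun i' _ => integrable_finset_sum _
            (fun j' _ => (hvv_int i' j').const_mul _))]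
          refine Finset.sum_congr rfl fun i' _ => ?_
          rw [integral_finset_sum _ (fun j' _ => (hvv_int i' j').const_mul _)]
          exact Finset.sum_congr rfl fun j' _ => (integral_const_mul _ _).symm
      _ ≤ ∫ ω, ρ * ∑ i, (x k ω i) ^ 2 ∂μ := by
          apply integral_mono
          · exact integrable_finset_sum _ (fun i' _ => integrable_finset_sum _
              (fun j' _ => (hvv_int i' j').const_mul _))
          · apply Integrable.const_mul
            apply integrable_finset_sum
            intro i _
            have : (fun ω => (x k ω i) ^ 2) = fun ω => x k ω i * x k ω i := by
              funext ω; ring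
            rw [this]
            exact hvv_int i i
          · intro ω
            exact hquad (x k ω)
      _ = ρ * ∫ ω, ∑ i, (x k ω i) ^ 2 ∂μ := integral_const_mul _ _
  -- iterate the contraction and squeeze
  have hE0 : (∫ ω, ∑ i, (x 0 ω i) ^ 2 ∂μ) = ∑ i, x₀ i ^ 2 := by
    simp [hx0]
  have hEnonneg : ∀ k, 0 ≤ ∫ ω, ∑ i, (x k ω i) ^ 2 ∂μ := by
    intro k
    apply integral_nonneg
    intro ω
    exact Finset.sum_nonneg fun i _ => sq_nonneg _
  have hEle : ∀ k, (∫ ω, ∑ i, (x k ω i) ^ 2 ∂μ) ≤ ρ ^ k * ∑ i, x₀ i ^ 2 := by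
    intro k
    induction k with
    | zero => rw [hE0, pow_zero, one_mul]
    | succ k ih =>
      calc (∫ ω, ∑ i, (x (k+1) ω i) ^ 2 ∂μ)
          ≤ ρ * ∫ ω, ∑ i, (x k ω i) ^ 2 ∂μ := hstep k
        _ ≤ ρ * (ρ ^ k * ∑ i, x₀ i ^ 2) := mul_le_mul_of_nonneg_left ih hρ0
        _ = ρ ^ (k+1) * ∑ i, x₀ i ^ 2 := by ring
  have hlim : Tendsto (fun k => ρ ^ k * ∑ i, x₀ i ^ 2) atTop (nhds 0) := by
    have := (tendsto_pow_atTop_nhds_zero_of_lt_one hρ0 hρ1).mul_const (∑ i, x₀ i ^ 2)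
    simpa using this
  exact squeeze_zero hEnonneg hEle hlim
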